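/- For every quadruple ε = (ε₁, ε₂, ε₃, ε₄) with each εᵢ ∈ {+1, −1} and every integer n, the presented group G_{ε,n} is generated by the images of x₁ and t; that is, the subgroup closure of {x₁, t} in G_{ε,n} is the whole group. In particular the rank (minimal number of generators) of the fundamental group of the genus-two surface bundle M_{ε,n} is at most two. -/

import Mathlib

/-! `F` is the free group on four generators `a₁, a₂, a₃, a₄`;
here `a 0 = a₁`, `a 1 = a₂`, `a 2 = a₃`, `a 3 = a₄`. -/

abbrev F : Type := FreeGroup (Fin 4)

def a (i : Fin 4) : F := FreeGroup.of i

/-- `Δ i ε` is the endomorphism `Δ_{i+1}^ε` of `F` induced by the `ε`-th power of the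
Dehn twist `D_{i+1}` (the index is shifted by one): `Δ 0 ε = Δ₁^ε`, …, `Δ 4 ε = Δ₅^ε`. -/
def Δ : Fin 5 → ℤ → (F →* F) := fun i ε =>
  FreeGroup.lift (![
    ![a 0, a 1 * a 0 ^ ε, a 2, a 3],
    ![a 0 * a 1 ^ (-ε), a 1, a 2, a 3],
    ![a 0, ((a 2)⁻¹ * a 0) ^ ε * a 1, a 2, ((a 2)⁻¹ * a 0) ^ ε * a 3],
    ![a 0, a 1, a 2 * a 3 ^ ε, a 3],
    ![a 0, a 1, a 2, a 3 * a 2 ^ (-ε)]] i)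

lemma Δ_inv_comp (i : Fin 5) (ε : ℤ) :
    (Δ i (-ε)).comp (Δ i ε) = MonoidHom.id F := by
  apply FreeGroup.ext_hom
  intro j
  fin_cases i <;> fin_cases j <;>
    simp [Δ, a, MonoidHom.comp_apply]

/-- `Δ i ε` as an automorphism of `F` (its inverse is `Δ i (-ε)`). -/
def Δaut (i : Fin 5) (ε : ℤ) : F ≃* F where
  toFun := Δ i ε
  invFun := Δ i (-ε)
  left_inv := fun x => by
    simpa using congrArg (fun f : F →* F => f x) (Δ_inv_comp i ε)
  right_inv := fun x => by
    have h := congrArg (fun f : F →* F => f x) (Δ_inv_comp i (-ε))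
    rw [neg_neg] at h
    simpa using h
  map_mul' := map_mul _

/-- The automorphism `Φ_{ε,n} = Δ₂^{ε₂} ∘ Δ₁^{ε₁} ∘ Δ₃^{ε₃} ∘ Δ₄^{ε₄} ∘ (Δ₅^{+1})^n` of `F`
(multiplication of automorphisms is composition). -/
def Φ (ε₁ ε₂ ε₃ ε₄ n : ℤ) : F ≃* F :=
  Δaut 1 ε₂ * Δaut 0 ε₁ * Δaut 2 ε₃ * Δaut 3 ε₄ * (Δaut 4 1) ^ n

/-- `ρ` rewrites a word in `a₁,…,a₄` as the corresponding word in the first four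
generators `x₁,…,x₄` of the free group on five generators `x₁, x₂, x₃, x₄, t`
(here `t` is the fifth generator `(4 : Fin 5)`). -/
def ρ : F →* FreeGroup (Fin 5) := FreeGroup.lift fun j => FreeGroup.of (Fin.castSucc j)

/-- The relators `t⁻¹·xᵢ·t·(ρ(Φ_{ε,n}(aᵢ)))⁻¹` for `i = 1, 2, 3, 4`. -/
def monodromyRels (ε₁ ε₂ ε₃ ε₄ n : ℤ) : Set (FreeGroup (Fin 5)) :=
  { w | ∃ i : Fin 4,
      w = (FreeGroup.of 4)⁻¹ * FreeGroup.of (Fin.castSucc i) * FreeGroup.of 4 *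
        (ρ (Φ ε₁ ε₂ ε₃ ε₄ n (a i)))⁻¹ }

/-- The surface relator `[x₁,x₂]·[x₃,x₄]⁻¹` on the generators `x₁,…,x₄`. -/
def surfaceRel : FreeGroup (Fin 5) :=
  (FreeGroup.of 0 * FreeGroup.of 1 * (FreeGroup.of 0)⁻¹ * (FreeGroup.of 1)⁻¹) *
    (FreeGroup.of 2 * FreeGroup.of 3 * (FreeGroup.of 2)⁻¹ * (FreeGroup.of 3)⁻¹)⁻¹

/-- `G_{ε,n}`, the fundamental group of the closed genus-two surface bundle
`M_{ε,n}`: generators `x₁, x₂, x₃, x₄, t`, relators `t⁻¹·xᵢ·t·(ρ(Φ_{ε,n}(aᵢ)))⁻¹`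
(`i = 1,…,4`) together with `[x₁,x₂]·[x₃,x₄]⁻¹`. -/
def G (ε₁ ε₂ ε₃ ε₄ n : ℤ) : Type :=
  PresentedGroup (monodromyRels ε₁ ε₂ ε₃ ε₄ n ∪ {surfaceRel})

instance (ε₁ ε₂ ε₃ ε₄ n : ℤ) : Group (G ε₁ ε₂ ε₃ ε₄ n) :=
  inferInstanceAs (Group (PresentedGroup _))

/-- `G_{ε,n}` is generated by the images of `x₁` and `t`; in particular the rank of the
fundamental group of the genus-two surface bundle `M_{ε,n}` is at most two. -/

lemma Δaut_apply (i : Fin 5) (ε : ℤ) (x : F) : Δaut i ε x = Δ i ε x := rfl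

lemma zpow_fix (φ : F ≃* F) (x : F) (h : φ x = x) (n : ℤ) : (φ ^ n) x = x := by
  have hmem : φ ∈ MulAction.stabilizer (MulAut F) x := h
  have := zpow_mem hmem n
  simpa [MulAction.mem_stabilizer_iff, MulAut.smul_def] using this

lemma Phi0 (ε₁ ε₂ ε₃ ε₄ n : ℤ) :
    Φ ε₁ ε₂ ε₃ ε₄ n (a 0) = a 0 * (a 1) ^ (-ε₂) := by
  show (Δaut 1 ε₂) ((Δaut 0 ε₁) ((Δaut 2 ε₃) ((Δaut 3 ε₄) (((Δaut 4 1) ^ n) (a 0))))) = _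
  rw [zpow_fix _ _ (by simp [Δaut_apply, Δ, a]) n]
  simp [Δaut_apply, Δ, a]

lemma Phi1 (ε₁ ε₂ ε₃ ε₄ n : ℤ) :
    Φ ε₁ ε₂ ε₃ ε₄ n (a 1) =
      ((a 2)⁻¹ * (a 0 * (a 1) ^ (-ε₂))) ^ ε₃ * a 1 * (a 0 * (a 1) ^ (-ε₂)) ^ ε₁ := by
  show (Δaut 1 ε₂) ((Δaut 0 ε₁) ((Δaut 2 ε₃) ((Δaut 3 ε₄) (((Δaut 4 1) ^ n) (a 1))))) = _
  rw [zpow_fix _ _ (by simp [Δaut_apply, Δ, a]) n]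
  simp [Δaut_apply, Δ, a, mul_assoc]

lemma Phi2 (ε₁ ε₂ ε₃ ε₄ n : ℤ) :
    Φ ε₁ ε₂ ε₃ ε₄ n (a 2) =
      a 2 * (((a 2)⁻¹ * (a 0 * (a 1) ^ (-ε₂))) ^ ε₃ * a 3) ^ ε₄ := by
  show (Δaut 1 ε₂) ((Δaut 0 ε₁) ((Δaut 2 ε₃) ((Δaut 3 ε₄) (((Δaut 4 1) ^ n) (a 2))))) = _
  rw [zpow_fix _ _ (by simp [Δaut_apply, Δ, a]) n]
  simp [Δaut_apply, Δ, a, mul_assoc]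

lemma mem_of_zpow_mem {G : Type*} [Group G] {H : Subgroup G} {g : G} {ε : ℤ}
    (h : ε = 1 ∨ ε = -1) (hg : g ^ ε ∈ H) : g ∈ H := by
  rcases h with rfl | rfl
  · simpa using hg
  · rw [zpow_neg, zpow_one] at hg
    exact H.inv_mem_iff.mp hg

/-- `G_{ε,n}` is generated by the images of `x₁` and `t`; in particular the rank of the
fundamental group of the genus-two surface bundle `M_{ε,n}` is at most two. -/
theorem G_generated_by_two (ε₁ ε₂ ε₃ ε₄ : ℤ)
    (h₁ : ε₁ = 1 ∨ ε₁ = -1) (h₂ : ε₂ = 1 ∨ ε₂ = -1)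
    (h₃ : ε₃ = 1 ∨ ε₃ = -1) (h₄ : ε₄ = 1 ∨ ε₄ = -1) (n : ℤ) :
    Subgroup.closure
      ({PresentedGroup.of (rels := monodromyRels ε₁ ε₂ ε₃ ε₄ n ∪ {surfaceRel}) 0,
        PresentedGroup.of (rels := monodromyRels ε₁ ε₂ ε₃ ε₄ n ∪ {surfaceRel}) 4} :
          Set (G ε₁ ε₂ ε₃ ε₄ n)) = ⊤ := by
  set rels := monodromyRels ε₁ ε₂ ε₃ ε₄ n ∪ {surfaceRel} with hrels
  set H := Subgroup.closure
      ({PresentedGroup.of (rels := rels) 0, PresentedGroup.of (rels := rels) 4} :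
        Set (G ε₁ ε₂ ε₃ ε₄ n)) with hH
  set m := PresentedGroup.mk rels with hm
  -- the images of the generators
  set T : G ε₁ ε₂ ε₃ ε₄ n := PresentedGroup.of (rels := rels) 4 with hT
  set A : Fin 4 → G ε₁ ε₂ ε₃ ε₄ n := fun i => m (ρ (a i)) with hA
  have hAof : ∀ i : Fin 4, A i = PresentedGroup.of (rels := rels) (Fin.castSucc i) := by
    intro i; rfl
  -- relations
  have key : ∀ i : Fin 4, T⁻¹ * A i * T = m (ρ (Φ ε₁ ε₂ ε₃ ε₄ n (a i))) := by
    intro i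
    have hmem : ((FreeGroup.of 4)⁻¹ * FreeGroup.of (Fin.castSucc i) * FreeGroup.of 4 *
        (ρ (Φ ε₁ ε₂ ε₃ ε₄ n (a i)))⁻¹ : FreeGroup (Fin 5)) ∈ Subgroup.normalClosure rels :=
      Subgroup.subset_normalClosure (Or.inl ⟨i, rfl⟩)
    have h1 : m ((FreeGroup.of 4)⁻¹ * FreeGroup.of (Fin.castSucc i) * FreeGroup.of 4 *
        (ρ (Φ ε₁ ε₂ ε₃ ε₄ n (a i)))⁻¹) = 1 := (QuotientGroup.eq_one_iff _).mpr hmem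
    rw [map_mul, map_inv, mul_inv_eq_one] at h1
    simp only [map_mul, map_inv] at h1
    exact h1
  have hT_mem : T ∈ H := Subgroup.subset_closure (by right; rfl)
  have hA0 : A 0 ∈ H := by
    rw [hAof]; exact Subgroup.subset_closure (by left; rfl)
  -- relation 0 : T⁻¹ A0 T = A0 * A1^{-ε₂}
  have r0 : T⁻¹ * A 0 * T = A 0 * (A 1) ^ (-ε₂) := by
    have := key 0
    rwa [Phi0, map_mul, map_zpow, map_mul, map_zpow] at this
  have hA1 : A 1 ∈ H := by
    apply mem_of_zpow_mem (ε := -ε₂) (by rcases h₂ with rfl | rfl <;> simp)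
    have : (A 1) ^ (-ε₂) = (A 0)⁻¹ * (T⁻¹ * A 0 * T) := by
      rw [r0]; group
    rw [this]
    exact H.mul_mem (H.inv_mem hA0) (H.mul_mem (H.mul_mem (H.inv_mem hT_mem) hA0) hT_mem)
  -- relation 1
  have r1 : T⁻¹ * A 1 * T =
      ((A 2)⁻¹ * (A 0 * (A 1) ^ (-ε₂))) ^ ε₃ * A 1 * (A 0 * (A 1) ^ (-ε₂)) ^ ε₁ := by
    have := key 1
    rw [Phi1] at this
    simp only [map_mul, map_inv, map_zpow] at this
    exact this
  have hB : A 0 * (A 1) ^ (-ε₂) ∈ H := H.mul_mem hA0 (H.zpow_mem hA1 _)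
  have hQ : (A 2)⁻¹ * (A 0 * (A 1) ^ (-ε₂)) ∈ H := by
    apply mem_of_zpow_mem h₃
    have : ((A 2)⁻¹ * (A 0 * (A 1) ^ (-ε₂))) ^ ε₃ =
        (T⁻¹ * A 1 * T) * ((A 0 * (A 1) ^ (-ε₂)) ^ ε₁)⁻¹ * (A 1)⁻¹ := by
      rw [r1]; group
    rw [this]
    exact H.mul_mem (H.mul_mem (H.mul_mem (H.mul_mem (H.inv_mem hT_mem) hA1) hT_mem)
      (H.inv_mem (H.zpow_mem hB _))) (H.inv_mem hA1)
  have hA2 : A 2 ∈ H := by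
    have : A 2 = (A 0 * (A 1) ^ (-ε₂)) * ((A 2)⁻¹ * (A 0 * (A 1) ^ (-ε₂)))⁻¹ := by group
    rw [this]
    exact H.mul_mem hB (H.inv_mem hQ)
  -- relation 2
  have r2 : T⁻¹ * A 2 * T =
      A 2 * (((A 2)⁻¹ * (A 0 * (A 1) ^ (-ε₂))) ^ ε₃ * A 3) ^ ε₄ := by
    have := key 2
    rw [Phi2] at this
    simp only [map_mul, map_inv, map_zpow] at this
    exact this
  have hA3 : A 3 ∈ H := by
    have h5 : ((A 2)⁻¹ * (A 0 * (A 1) ^ (-ε₂))) ^ ε₃ * A 3 ∈ H := by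
      apply mem_of_zpow_mem h₄
      have : (((A 2)⁻¹ * (A 0 * (A 1) ^ (-ε₂))) ^ ε₃ * A 3) ^ ε₄ =
          (A 2)⁻¹ * (T⁻¹ * A 2 * T) := by rw [r2]; group
      rw [this]
      exact H.mul_mem (H.inv_mem hA2) (H.mul_mem (H.mul_mem (H.inv_mem hT_mem) hA2) hT_mem)
    have : A 3 = (((A 2)⁻¹ * (A 0 * (A 1) ^ (-ε₂))) ^ ε₃)⁻¹ *
        (((A 2)⁻¹ * (A 0 * (A 1) ^ (-ε₂))) ^ ε₃ * A 3) := by group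
    rw [this]
    exact H.mul_mem (H.inv_mem (H.zpow_mem hQ _)) h5
  -- conclude
  rw [eq_top_iff]
  intro x _
  refine PresentedGroup.generated_by rels H (fun j => ?_) x
  fin_cases j
  · exact hA0
  · exact hA1
  · exact hA2
  · exact hA3
  · exact hT_mem
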